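/- Let a, b ∈ ℂ satisfy |a|² + |b|² = 1 and conj(a)·b + conj(b)·a = 0. Then there exist real numbers θ and φ such that a = e^{iθ} cos φ and b = i e^{iθ} sin φ. -/

import Mathlib

/-- Every solution of the two-generator unitarity conditions
`|a|² + |b|² = 1` and `conj(a)·b + conj(b)·a = 0` has the form
`a = e^{iθ} cos φ`, `b = i e^{iθ} sin φ` for some reals `θ, φ`. -/
theorem two_coefficient_solution (a b : ℂ)
    (hnorm : ‖a‖ ^ 2 + ‖b‖ ^ 2 = 1)
    (horth : (starRingEnd ℂ) a * b + (starRingEnd ℂ) b * a = 0) :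
    ∃ θ φ : ℝ, a = Complex.exp (θ * Complex.I) * Real.cos φ ∧
      b = Complex.I * Complex.exp (θ * Complex.I) * Real.sin φ := by
  have hre : ((starRingEnd ℂ) a * b).re = 0 := by
    have h := congrArg Complex.re horth
    simp only [Complex.add_re, Complex.mul_re, Complex.zero_re] at h
    simp [Complex.conj_re, Complex.conj_im] at h ⊢
    linarith
  by_cases ha : a = 0
  · -- then |b| = 1
    subst ha
    have hb0 : ‖b‖ ^ 2 = 1 := by simpa using hnorm
    have hb1 : ‖b‖ = 1 := by
      nlinarith [norm_nonneg b]
    have hB : Complex.exp (Complex.arg b * Complex.I) = b := by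
      have := Complex.norm_mul_exp_arg_mul_I b
      rw [hb1] at this
      simpa using this
    have hI : Complex.exp ((Real.pi / 2 : ℝ) * Complex.I) = Complex.I := by
      rw [Complex.exp_mul_I]; push_cast; simp
    refine ⟨Complex.arg b - Real.pi / 2, Real.pi / 2, by simp, ?_⟩
    rw [Real.sin_pi_div_two]
    push_cast
    rw [mul_one]
    have key : Complex.I * Complex.exp ((↑(Complex.arg b) - ↑Real.pi / 2) * Complex.I)
        = Complex.exp (↑(Complex.arg b) * Complex.I) := by
      rw [show ((Complex.arg b : ℂ) - ↑Real.pi / 2) * Complex.I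
          = ↑(Complex.arg b) * Complex.I - ((Real.pi / 2 : ℝ) : ℂ) * Complex.I by
            push_cast; ring, Complex.exp_sub, hI]
      field_simp
    rw [key, hB]
  · set c : ℝ := ((starRingEnd ℂ) a * b).im / ‖a‖ ^ 2 with hc
    have ha2 : ‖a‖ ^ 2 ≠ 0 := by
      simpa using (pow_ne_zero 2 (norm_ne_zero_iff.mpr ha))
    have hC : ((‖a‖ : ℝ) : ℂ) ≠ 0 := by
      exact_mod_cast norm_ne_zero_iff.mpr ha
    have hconj : (starRingEnd ℂ) a ≠ 0 := by simpa using ha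
    have hb : b = Complex.I * c * a := by
      have key : (starRingEnd ℂ) a * b = (starRingEnd ℂ) a * (Complex.I * c * a) := by
        have h1 : (starRingEnd ℂ) a * b = (((starRingEnd ℂ) a * b).im : ℂ) * Complex.I := by
          rw [← Complex.re_add_im ((starRingEnd ℂ) a * b), hre]; simp
        have h2 : (starRingEnd ℂ) a * a = ((‖a‖ : ℂ)) ^ 2 := by
          rw [← Complex.normSq_eq_conj_mul_self, Complex.normSq_eq_norm_sq]
          push_cast; ring
        rw [h1]
        have h3 : (starRingEnd ℂ) a * (Complex.I * c * a)
            = Complex.I * c * ((starRingEnd ℂ) a * a) := by ring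
        rw [h3, h2, hc]
        push_cast
        field_simp
      exact mul_left_cancel₀ hconj key
    have habs : ‖b‖ = |c| * ‖a‖ := by
      rw [hb]; simp [abs_mul, Complex.norm_real]
    have hpos : (0:ℝ) < 1 + c ^ 2 := by positivity
    have hsq : ‖a‖ ^ 2 * (1 + c ^ 2) = 1 := by
      rw [habs] at hnorm
      have : |c| ^ 2 = c ^ 2 := sq_abs c
      nlinarith
    have haval : ‖a‖ = 1 / Real.sqrt (1 + c ^ 2) := by
      rw [eq_div_iff (by positivity : Real.sqrt (1 + c ^ 2) ≠ 0)]
      have h1 : (‖a‖ * Real.sqrt (1 + c ^ 2)) ^ 2 = 1 := by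
        rw [mul_pow, Real.sq_sqrt hpos.le, hsq]
      nlinarith [norm_nonneg a, Real.sqrt_nonneg (1 + c ^ 2),
        mul_nonneg (norm_nonneg a) (Real.sqrt_nonneg (1 + c ^ 2))]
    have hθ : a = Complex.exp ((Complex.arg a : ℝ) * Complex.I) * (‖a‖ : ℂ) := by
      rw [mul_comm]; exact (Complex.norm_mul_exp_arg_mul_I a).symm
    have hsin : c / Real.sqrt (1 + c ^ 2) = c * ‖a‖ := by
      rw [haval]; ring
    refine ⟨Complex.arg a, Real.arctan c, ?_, ?_⟩
    · rw [Real.cos_arctan, ← haval]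
      exact_mod_cast hθ
    · rw [Real.sin_arctan, hsin]
      push_cast
      have hA : (‖a‖ : ℂ) * Complex.exp (Complex.arg a * Complex.I) = a := by
        exact_mod_cast Complex.norm_mul_exp_arg_mul_I a
      have hb' : b = Complex.I * (c : ℂ) * a := hb
      linear_combination hb' - Complex.I * (c : ℂ) * hA
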